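/- Let d = 2^ρ and suppose for each round r = 1,…,ρ the block containing arm a(i) in M_r is obtained by merging; let X_{t_1}, X_{t_2}^c,…,X_{t_{r−1}}^c be the observed rewards for the complementary blocks at rounds 1,…,r−1 and X_t^c the reward of the round-r coded arm containing a(i). Then a(i)ᵀθ* + (η_t − η_{t_{r−1}} − … − η_{t_1}) = X_t^c − X_{t_{r−1}}^c − … − X_{t_2}^c − X_{t_1}, so the reward of a(i) is decodable with additive noise of variance r (when the η's are independent with variance 1). -/

import Mathlib

open MeasureTheory ProbabilityTheory Matrix

/-- Decoding lemma: with nested blocks `S 1 = {i}`, `S (k+1) = S k ∪ D k` (disjoint), coded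
rewards `Y k` for the complementary blocks `D k` at rounds `1,…,r−1`, and `X` the reward of
the round-`r` coded arm containing `a(i)`, we have
`X − ∑_{k=1}^{r−1} Y k = a(i)ᵀθ* + (η_r − ∑_{k=1}^{r−1} η_k)`, a noise of variance `r` when
the `η`'s are independent mean-zero variance-1. -/
theorem stmt17 {Ω ι : Type*} [MeasurableSpace Ω] (μ : Measure Ω) [IsProbabilityMeasure μ]
    [DecidableEq ι] (n : ℕ) (a : ι → Fin n → ℝ) (θ : Fin n → ℝ)
    (r : ℕ) (hr : 1 ≤ r) (i : ι)
    (S D : ℕ → Finset ι)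
    (hS1 : S 1 = {i})
    (hSk : ∀ k, 1 ≤ k → k < r → S (k + 1) = S k ∪ D k ∧ Disjoint (S k) (D k))
    (η : ℕ → Ω → ℝ)
    (hind : iIndepFun (fun k : Fin (r + 1) => η k) μ)
    (hmem : ∀ k, MemLp (η k) 2 μ) (hmean : ∀ k, μ[η k] = 0)
    (hvar : ∀ k, variance (η k) μ = 1)
    (Y : ℕ → Ω → ℝ)
    (hY : ∀ k, 1 ≤ k → k < r → ∀ ω, Y k ω = (∑ j ∈ D k, a j) ⬝ᵥ θ + η k ω)
    (X : Ω → ℝ) (hX : ∀ ω, X ω = (∑ j ∈ S r, a j) ⬝ᵥ θ + η r ω) :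
    (∀ ω, X ω - ∑ k ∈ Finset.Ico 1 r, Y k ω
        = a i ⬝ᵥ θ + (η r ω - ∑ k ∈ Finset.Ico 1 r, η k ω)) ∧
    variance (fun ω => η r ω - ∑ k ∈ Finset.Ico 1 r, η k ω) μ = r := by
  constructor
  · -- decoding identity
    have hsum : ∀ m, 1 ≤ m → m ≤ r →
        (∑ j ∈ S m, a j) = a i + ∑ k ∈ Finset.Ico 1 m, ∑ j ∈ D k, a j := by
      intro m hm1 hmr
      induction m with
      | zero => omega
      | succ m ih =>
        rcases Nat.eq_or_lt_of_le hm1 with h1 | h1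
        · simp [← h1, hS1]
        · have hm1' : 1 ≤ m := by omega
          have hmr' : m < r := by omega
          obtain ⟨hSm, hdisj⟩ := hSk m hm1' hmr'
          rw [hSm, Finset.sum_union hdisj, ih hm1' (by omega),
            Finset.sum_Ico_succ_top hm1', add_assoc]
    intro ω
    have key := hsum r hr le_rfl
    rw [hX ω, key]
    have hYsum : ∑ k ∈ Finset.Ico 1 r, Y k ω
        = ∑ k ∈ Finset.Ico 1 r, ((∑ j ∈ D k, a j) ⬝ᵥ θ + η k ω) := by
      refine Finset.sum_congr rfl fun k hk => ?_
      rw [Finset.mem_Ico] at hk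
      exact hY k hk.1 hk.2 ω
    have hdp : ∀ (f : ℕ → Fin n → ℝ), (∑ k ∈ Finset.Ico 1 r, f k) ⬝ᵥ θ
        = ∑ k ∈ Finset.Ico 1 r, f k ⬝ᵥ θ := by
      intro f
      simp only [dotProduct, Finset.sum_apply, Finset.sum_mul]
      exact Finset.sum_comm
    rw [hYsum, Finset.sum_add_distrib, add_dotProduct, hdp]
    ring
  · -- the variance computation
    classical
    set Z : ℕ → Ω → ℝ := fun k => if k = r then η k else -η k with hZ
    have hZsum : (fun ω => η r ω - ∑ k ∈ Finset.Ico 1 r, η k ω)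
        = ∑ k ∈ Finset.Ico 1 (r + 1), Z k := by
      have h1 : Z r = η r := by simp [hZ]
      have h2 : ∀ k ∈ Finset.Ico 1 r, Z k = fun ω => -η k ω := by
        intro k hk
        rw [Finset.mem_Ico] at hk
        simp [hZ, show k ≠ r by omega]; rfl
      funext ω
      rw [Finset.sum_apply, Finset.sum_Ico_succ_top hr, h1,
        Finset.sum_congr rfl fun k hk => congrFun (h2 k hk) ω, Finset.sum_neg_distrib]
      ring
    have hZmem : ∀ k ∈ Finset.Ico 1 (r + 1), MemLp (Z k) 2 μ := by
      intro k _
      simp only [hZ]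
      split
      · exact hmem k
      · exact (hmem k).neg
    have hZvar : ∀ k ∈ Finset.Ico 1 (r + 1), variance (Z k) μ = 1 := by
      intro k _
      simp only [hZ]
      split
      · exact hvar k
      · have : (-η k) = (-1 : ℝ) • η k := by funext ω; simp
        rw [this, variance_smul]
        simp [hvar k]
    have hpair : Set.Pairwise ↑(Finset.Ico 1 (r + 1))
        fun j k => IndepFun (Z j) (Z k) μ := by
      intro j hj k hk hjk
      simp only [Finset.coe_Ico, Set.mem_Ico] at hj hk
      have hji : j < r + 1 := hj.2
      have hki : k < r + 1 := hk.2
      have hne : (⟨j, hji⟩ : Fin (r + 1)) ≠ ⟨k, hki⟩ := by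
        simp [Fin.ext_iff]; omega
      have hI : IndepFun (η j) (η k) μ := by
        have := hind.indepFun hne
        simpa using this
      simp only [hZ]
      split <;> split
      · exact hI
      · exact hI.neg_right
      · exact hI.neg_left
      · exact hI.neg_left.neg_right
    rw [hZsum, IndepFun.variance_sum hZmem hpair,
      Finset.sum_congr rfl hZvar]
    simp
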